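/- The Fermat polynomials {x_i^q x_j - x_i x_j^q : 0 ≤ i < j ≤ m} form a Gröbner basis of the ideal they generate in k[x_0,...,x_m], with respect to any monomial order in which x_0 > x_1 > ... > x_m; in fact they form a reduced Gröbner basis. -/

import Mathlib

open MvPolynomial Finset

/-- Reduce an exponent modulo `q-1`: unchanged if `≤ q-1`, otherwise the
representative in `{1,...,q-1}` congruent to it modulo `q-1`. -/
def redExp (q a : ℕ) : ℕ := if a ≤ q - 1 then a else (a - 1) % (q - 1) + 1

/-- Projective reduction of a monomial (given by its exponent vector): all exponents
below the top variable of the support are reduced modulo `q-1`, and the difference is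
transferred to the exponent of the top variable. -/
noncomputable def projRed (q : ℕ) {m : ℕ} (μ : Fin (m + 1) →₀ ℕ) : Fin (m + 1) →₀ ℕ :=
  if h : μ.support.Nonempty then
    letI ℓ := μ.support.max' h
    Finsupp.equivFunOnFinite.symm fun i =>
      if i < ℓ then redExp q (μ i)
      else if i = ℓ then μ ℓ + ∑ j ∈ Finset.univ.filter (· < ℓ), (μ j - redExp q (μ j))
      else 0
  else 0

/-- Projective reduction of a polynomial: the linear extension of projective
reduction of monomials. -/
noncomputable def polyRed (q : ℕ) {m : ℕ} {k : Type} [CommRing k]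
    (f : MvPolynomial (Fin (m + 1)) k) : MvPolynomial (Fin (m + 1)) k :=
  f.support.sum fun μ => monomial (projRed q μ) (coeff μ f)

/-- The ideal generated by the Fermat polynomials `X i ^ q * X j - X i * X j ^ q`. -/
noncomputable def fermatIdeal (q m : ℕ) (k : Type) [CommRing k] : Ideal (MvPolynomial (Fin (m + 1)) k) :=
  Ideal.span {f | ∃ i j : Fin (m + 1), i < j ∧ f = X i ^ q * X j - X i * X j ^ q}

/-- The leading exponent (exponent vector of the leading monomial) of a multivariate
polynomial with respect to a monomial order. -/
noncomputable def lmExp {σ : Type} (mo : MonomialOrder σ) {R : Type} [CommSemiring R]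
    (f : MvPolynomial σ R) : σ →₀ ℕ :=
  mo.toSyn.symm (f.support.sup fun μ => mo.toSyn μ)


section FermatAux

lemma redExp_le (q a : ℕ) : redExp q a ≤ a := by
  unfold redExp; split_ifs with h
  · exact le_rfl
  · have := Nat.mod_le (a - 1) (q - 1); omega

lemma redExp_of_le {q a : ℕ} (h : a ≤ q - 1) : redExp q a = a := if_pos h

lemma redExp_add {q : ℕ} (hq : 2 ≤ q) (a : ℕ) : redExp q (a + q) = redExp q (a + 1) := by
  unfold redExp
  have h1 : ¬ (a + q ≤ q - 1) := by omega
  rw [if_neg h1]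
  have h2 : a + q - 1 = a + (q - 1) := by omega
  rw [h2, Nat.add_mod_right]
  split_ifs with h3
  · have : a % (q - 1) = a := Nat.mod_eq_of_lt (by omega)
    omega
  · have : a + 1 - 1 = a := by omega
    rw [this]

lemma projRed_apply (q : ℕ) {m : ℕ} (μ : Fin (m + 1) →₀ ℕ) (h : μ.support.Nonempty)
    (t : Fin (m+1)) :
    projRed q μ t =
      if t < μ.support.max' h then redExp q (μ t)
      else if t = μ.support.max' h then
        μ (μ.support.max' h)
          + ∑ j ∈ Finset.univ.filter (· < μ.support.max' h), (μ j - redExp q (μ j))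
      else 0 := by
  rw [projRed, dif_pos h]
  simp

variable {m : ℕ}

lemma projRed_exchange {q : ℕ} (hq : 2 ≤ q) (i j : Fin (m+1)) (hij : i < j)
    (ν : Fin (m+1) →₀ ℕ) :
    projRed q (ν + Finsupp.single i q + Finsupp.single j 1)
      = projRed q (ν + Finsupp.single i 1 + Finsupp.single j q) := by
  set μ := ν + Finsupp.single i q + Finsupp.single j 1 with hμ
  set μ' := ν + Finsupp.single i 1 + Finsupp.single j q with hμ'
  have hμa : ∀ t, μ t = ν t + (if i = t then q else 0) + (if j = t then 1 else 0) := by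
    intro t; simp [hμ, Finsupp.single_apply]
  have hμ'a : ∀ t, μ' t = ν t + (if i = t then 1 else 0) + (if j = t then q else 0) := by
    intro t; simp [hμ', Finsupp.single_apply]
  have hsupp : μ.support = μ'.support := by
    ext t
    simp only [Finsupp.mem_support_iff, hμa, hμ'a]
    split_ifs <;> omega
  have h1 : μ.support.Nonempty := by
    refine ⟨j, ?_⟩
    rw [Finsupp.mem_support_iff, hμa j, if_neg hij.ne, if_pos rfl]
    omega
  have h2 : μ'.support.Nonempty := hsupp ▸ h1
  set ℓ := μ.support.max' h1 with hℓ
  have hℓ' : μ'.support.max' h2 = ℓ := by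
    rw [hℓ]; congr 1; exact hsupp.symm
  have hjmem : j ∈ μ.support := by
    rw [Finsupp.mem_support_iff, hμa j, if_neg hij.ne, if_pos rfl]; omega
  have hjℓ : j ≤ ℓ := Finset.le_max' _ j hjmem
  have hiℓ : i < ℓ := lt_of_lt_of_le hij hjℓ
  -- pointwise facts
  have hμi : μ i = ν i + q := by
    have h := hμa i; rw [if_pos rfl, if_neg hij.ne'] at h; omega
  have hμ'i : μ' i = ν i + 1 := by
    have h := hμ'a i; rw [if_pos rfl, if_neg hij.ne'] at h; omega
  have hμj : μ j = ν j + 1 := by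
    have h := hμa j; rw [if_neg hij.ne, if_pos rfl] at h; omega
  have hμ'j : μ' j = ν j + q := by
    have h := hμ'a j; rw [if_neg hij.ne, if_pos rfl] at h; omega
  have hother : ∀ t, t ≠ i → t ≠ j → μ t = μ' t := by
    intro t h1 h2
    rw [hμa t, hμ'a t, if_neg (fun h => h1 h.symm), if_neg (fun h => h2 h.symm),
      if_neg (fun h => h1 h.symm), if_neg (fun h => h2 h.symm)]
  have hredi : redExp q (μ i) = redExp q (μ' i) := by rw [hμi, hμ'i, redExp_add hq]
  have hredj : redExp q (μ j) = redExp q (μ' j) := by rw [hμj, hμ'j, redExp_add hq]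
  ext t
  rw [projRed_apply q μ h1 t, projRed_apply q μ' h2 t, hℓ', ← hℓ]
  rcases lt_trichotomy t ℓ with htℓ | rfl | htℓ
  · rw [if_pos htℓ, if_pos htℓ]
    rcases eq_or_ne t i with rfl | hti
    · exact hredi
    rcases eq_or_ne t j with rfl | htj
    · exact hredj
    · rw [hother t hti htj]
  · rw [if_neg (lt_irrefl ℓ), if_neg (lt_irrefl ℓ), if_pos rfl, if_pos rfl]
    have hiF : i ∈ Finset.univ.filter (· < ℓ) := by simp [hiℓ]
    have hDi : μ i - redExp q (μ i) = (μ' i - redExp q (μ' i)) + (q - 1) := by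
      have l1 := redExp_le q (μ' i)
      rw [hredi, hμi, hμ'i]
      rw [hμ'i] at l1
      omega
    rcases eq_or_lt_of_le hjℓ with heqj | hjlt
    · -- top variable is j itself
      rw [← heqj]
      have hiF' : i ∈ Finset.univ.filter (· < j) := by simp [hij]
      have hsum : ∑ r ∈ Finset.univ.filter (· < j), (μ r - redExp q (μ r))
          = (∑ r ∈ Finset.univ.filter (· < j), (μ' r - redExp q (μ' r))) + (q - 1) := by
        rw [← Finset.add_sum_erase _ _ hiF', ← Finset.add_sum_erase _ _ hiF']
        have he : ∑ r ∈ (Finset.univ.filter (· < j)).erase i, (μ r - redExp q (μ r))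
            = ∑ r ∈ (Finset.univ.filter (· < j)).erase i, (μ' r - redExp q (μ' r)) := by
          refine Finset.sum_congr rfl (fun r hr => ?_)
          have hri : r ≠ i := Finset.ne_of_mem_erase hr
          have hrj : r ≠ j := by
            have := Finset.mem_of_mem_erase hr
            simp only [Finset.mem_filter] at this
            exact ne_of_lt this.2
          rw [hother r hri hrj]
        rw [he]
        omega
      rw [hsum, hμj, hμ'j]
      omega
    · -- top variable is above j
      have hjF : j ∈ (Finset.univ.filter (· < ℓ)).erase i := by
        simp [hjlt, hij.ne']
      have hDj : μ' j - redExp q (μ' j) = (μ j - redExp q (μ j)) + (q - 1) := by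
        have l1 := redExp_le q (μ j)
        rw [← hredj, hμj, hμ'j]
        rw [hμj] at l1
        omega
      have hℓℓ : μ ℓ = μ' ℓ := hother ℓ (ne_of_gt hiℓ) (ne_of_gt hjlt)
      have hsum : ∑ r ∈ Finset.univ.filter (· < ℓ), (μ r - redExp q (μ r))
          = ∑ r ∈ Finset.univ.filter (· < ℓ), (μ' r - redExp q (μ' r)) := by
        rw [← Finset.add_sum_erase _ _ hiF, ← Finset.add_sum_erase _ _ hiF,
          ← Finset.add_sum_erase _ _ hjF, ← Finset.add_sum_erase _ _ hjF]
        have he : ∑ r ∈ ((Finset.univ.filter (· < ℓ)).erase i).erase j,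
              (μ r - redExp q (μ r))
            = ∑ r ∈ ((Finset.univ.filter (· < ℓ)).erase i).erase j,
              (μ' r - redExp q (μ' r)) := by
          refine Finset.sum_congr rfl (fun r hr => ?_)
          have hrj : r ≠ j := Finset.ne_of_mem_erase hr
          have hri : r ≠ i := Finset.ne_of_mem_erase (Finset.mem_of_mem_erase hr)
          rw [hother r hri hrj]
        rw [he]
        omega
      rw [hsum, hℓℓ]
  · rw [if_neg (by omega : ¬ t < ℓ), if_neg (by omega : ¬ t = ℓ),
      if_neg (by omega : ¬ t < ℓ), if_neg (by omega : ¬ t = ℓ)]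

/-- A monomial none of whose sub-top exponents reaches `q` is fixed by `projRed`. -/
lemma projRed_of_reduced {q : ℕ} (hq : 2 ≤ q) (μ : Fin (m+1) →₀ ℕ)
    (hred : ∀ i j : Fin (m+1), i < j →
      ¬ (Finsupp.single i q + Finsupp.single j 1 ≤ μ)) :
    projRed q μ = μ := by
  by_cases h : μ.support.Nonempty
  · set ℓ := μ.support.max' h with hℓ
    have hmem : ℓ ∈ μ.support := Finset.max'_mem _ h
    have hℓpos : 0 < μ ℓ := Nat.pos_of_ne_zero (Finsupp.mem_support_iff.mp hmem)
    have hsmall : ∀ t : Fin (m+1), t < ℓ → μ t ≤ q - 1 := by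
      intro t ht
      by_contra hc
      apply hred t ℓ ht
      intro s
      rcases eq_or_ne s t with rfl | hst
      · rw [Finsupp.add_apply, Finsupp.single_apply, Finsupp.single_apply,
          if_pos rfl, if_neg (ne_of_gt ht)]
        omega
      · rcases eq_or_ne s ℓ with rfl | hsℓ
        · rw [Finsupp.add_apply, Finsupp.single_apply, Finsupp.single_apply,
            if_neg (fun hh => hst hh.symm), if_pos rfl]
          omega
        · rw [Finsupp.add_apply, Finsupp.single_apply, Finsupp.single_apply,
            if_neg (fun hh => hst hh.symm), if_neg (fun hh => hsℓ hh.symm)]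
          exact Nat.zero_le _
    ext t
    rw [projRed_apply q μ h t, ← hℓ]
    rcases lt_trichotomy t ℓ with htℓ | rfl | htℓ
    · rw [if_pos htℓ, redExp_of_le (hsmall t htℓ)]
    · rw [if_neg (lt_irrefl ℓ), if_pos rfl]
      have : ∀ r ∈ Finset.univ.filter (· < ℓ), μ r - redExp q (μ r) = 0 := by
        intro r hr
        simp only [Finset.mem_filter] at hr
        rw [redExp_of_le (hsmall r hr.2)]
        omega
      rw [Finset.sum_congr rfl this, Finset.sum_const_zero, add_zero]
    · rw [if_neg (by omega : ¬ t < ℓ), if_neg (by omega : ¬ t = ℓ)]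
      by_contra hc
      have : t ∈ μ.support := Finsupp.mem_support_iff.mpr (fun hh => hc hh.symm)
      exact absurd (Finset.le_max' _ t this) (by omega)
  · rw [projRed, dif_neg h]
    rw [Finset.not_nonempty_iff_eq_empty, Finsupp.support_eq_empty] at h
    exact h.symm

lemma projRed_rigid {q : ℕ} (mo : MonomialOrder (Fin (m+1)))
    (hvar : ∀ i j : Fin (m + 1), i < j →
      mo.toSyn (Finsupp.single j 1) < mo.toSyn (Finsupp.single i 1))
    (μ d : Fin (m+1) →₀ ℕ) (hd : projRed q μ = d)
    (hle : mo.toSyn μ ≤ mo.toSyn d) : μ = d := by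
  by_cases h : μ.support.Nonempty
  · set ℓ := μ.support.max' h with hℓ
    set F := Finset.univ.filter (· < ℓ) with hF
    set D : Fin (m+1) → ℕ := fun r => μ r - redExp q (μ r) with hD
    have key : μ + (∑ r ∈ F, D r) • Finsupp.single ℓ 1
        = projRed q μ + ∑ r ∈ F, D r • Finsupp.single r 1 := by
      ext t
      rw [Finsupp.add_apply, Finsupp.add_apply, Finsupp.smul_apply,
        projRed_apply q μ h t, ← hℓ]
      have hsum_apply : (∑ r ∈ F, D r • Finsupp.single r 1) t
          = ∑ r ∈ F, (if r = t then D r else 0) := by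
        rw [Finsupp.finset_sum_apply]
        refine Finset.sum_congr rfl fun r hr => ?_
        rw [Finsupp.smul_apply, Finsupp.single_apply]
        split_ifs <;> simp
      rw [hsum_apply, Finset.sum_ite_eq' F t D, Finsupp.single_apply]
      rcases lt_trichotomy t ℓ with htℓ | rfl | htℓ
      · rw [if_pos htℓ, if_neg (ne_of_gt htℓ), if_pos (by simp [hF, htℓ]), smul_zero]
        have := redExp_le q (μ t)
        simp only [hD]
        omega
      · rw [if_neg (lt_irrefl ℓ), if_pos rfl, if_pos rfl, if_neg (by simp [hF])]
        simp [hD, hF]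
      · rw [if_neg (by omega : ¬ t < ℓ), if_neg (by omega : ¬ t = ℓ),
          if_neg (by omega : ¬ ℓ = t), if_neg (by simp [hF]; omega)]
        have : μ t = 0 := by
          by_contra hc
          exact absurd (Finset.le_max' _ t (Finsupp.mem_support_iff.mpr hc)) (by omega)
        simp [this]
    have tkey := congrArg mo.toSyn key
    simp only [map_add, map_nsmul, map_sum] at tkey
    rw [hd] at tkey
    have hA : (∑ r ∈ F, D r) • mo.toSyn (Finsupp.single ℓ 1)
        = ∑ r ∈ F, D r • mo.toSyn (Finsupp.single ℓ 1) := Finset.sum_smul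
    have h1 : mo.toSyn d + ∑ r ∈ F, D r • mo.toSyn (Finsupp.single r 1)
        ≤ mo.toSyn d + ∑ r ∈ F, D r • mo.toSyn (Finsupp.single ℓ 1) := by
      rw [← tkey, ← hA]
      exact add_le_add hle le_rfl
    have h2 : ∑ r ∈ F, D r • mo.toSyn (Finsupp.single r 1)
        ≤ ∑ r ∈ F, D r • mo.toSyn (Finsupp.single ℓ 1) := le_of_add_le_add_left h1
    have hzero : ∀ r ∈ F, D r = 0 := by
      by_contra hc
      push_neg at hc
      obtain ⟨r, hrF, hr0⟩ := hc
      have hrℓ : r < ℓ := by simpa [hF] using hrF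
      have hstrict := Finset.sum_lt_sum
        (fun s hs => nsmul_le_nsmul_right
          (le_of_lt (hvar s ℓ (by simpa [hF] using hs))) (D s))
        ⟨r, hrF, nsmul_lt_nsmul_right hr0 (hvar r ℓ hrℓ)⟩
      exact absurd h2 (not_le.mpr hstrict)
    have hc0 : ∑ r ∈ F, D r = 0 := Finset.sum_eq_zero hzero
    have hs0 : ∑ r ∈ F, D r • Finsupp.single r 1 = (0 : Fin (m+1) →₀ ℕ) :=
      Finset.sum_eq_zero (fun r hr => by rw [hzero r hr, zero_smul])
    rw [hc0, zero_smul, add_zero, hd, hs0, add_zero] at key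
    exact key
  · rw [Finset.not_nonempty_iff_eq_empty, Finsupp.support_eq_empty] at h
    subst h
    rw [projRed, dif_neg (by simp)] at hd
    exact hd

variable {k : Type} [Field k]

lemma fermat_eq (q : ℕ) (i j : Fin (m+1)) :
    (X i ^ q * X j - X i * X j ^ q : MvPolynomial (Fin (m + 1)) k)
      = monomial (Finsupp.single i q + Finsupp.single j 1) 1
        - monomial (Finsupp.single i 1 + Finsupp.single j q) 1 := by
  rw [X_pow_eq_monomial, X_pow_eq_monomial, X, X, monomial_mul, monomial_mul, one_mul]

lemma mu_ne (q : ℕ) (hq : 2 ≤ q) (i j : Fin (m+1)) (hij : i < j) :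
    (Finsupp.single i q + Finsupp.single j 1 : Fin (m+1) →₀ ℕ)
      ≠ Finsupp.single i 1 + Finsupp.single j q := by
  intro h
  have := DFunLike.congr_fun h i
  simp [Finsupp.single_apply, (hij.ne' : j ≠ i)] at this
  omega

lemma coeff_fermat (q : ℕ) (i j : Fin (m+1)) (ν : Fin (m+1) →₀ ℕ) :
    coeff ν (X i ^ q * X j - X i * X j ^ q : MvPolynomial (Fin (m + 1)) k)
      = (if ν = Finsupp.single i q + Finsupp.single j 1 then 1 else 0)
        - (if ν = Finsupp.single i 1 + Finsupp.single j q then 1 else 0) := by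
  rw [fermat_eq, coeff_sub, coeff_monomial, coeff_monomial]
  simp [eq_comm]

lemma support_fermat (q : ℕ) (hq : 2 ≤ q) (i j : Fin (m+1)) (hij : i < j) :
    (X i ^ q * X j - X i * X j ^ q : MvPolynomial (Fin (m + 1)) k).support
      = {Finsupp.single i q + Finsupp.single j 1, Finsupp.single i 1 + Finsupp.single j q} := by
  ext ν
  rw [mem_support_iff, coeff_fermat]
  simp only [Finset.mem_insert, Finset.mem_singleton]
  have hne := mu_ne q hq i j hij
  split_ifs with h1 h2 <;> simp_all

variable (mo : MonomialOrder (Fin (m+1)))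
variable (hvar : ∀ i j : Fin (m + 1), i < j →
      mo.toSyn (Finsupp.single j 1) < mo.toSyn (Finsupp.single i 1))

include hvar in
lemma syn_mu2_lt_mu1 {q : ℕ} (hq : 2 ≤ q) (i j : Fin (m+1)) (hij : i < j) :
    mo.toSyn (Finsupp.single i 1 + Finsupp.single j q)
      < mo.toSyn (Finsupp.single i q + Finsupp.single j 1) := by
  have key : (Finsupp.single i 1 + Finsupp.single j q) + Finsupp.single i (q-1)
      = (Finsupp.single i q + Finsupp.single j 1) + Finsupp.single j (q-1) := by
    ext t
    simp [Finsupp.single_apply]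
    split_ifs <;> omega
  have h2 : mo.toSyn (Finsupp.single j (q-1)) < mo.toSyn (Finsupp.single i (q-1)) := by
    have hs : ∀ t : Fin (m+1), (Finsupp.single t (q-1) : Fin (m+1) →₀ ℕ)
        = (q-1) • Finsupp.single t 1 := by
      intro t; rw [Finsupp.smul_single, smul_eq_mul, mul_one]
    rw [hs i, hs j, map_nsmul, map_nsmul]
    exact nsmul_lt_nsmul_right (by omega) (hvar i j hij)
  have h3 : mo.toSyn (Finsupp.single i 1 + Finsupp.single j q) + mo.toSyn (Finsupp.single i (q-1))
      < mo.toSyn (Finsupp.single i q + Finsupp.single j 1) + mo.toSyn (Finsupp.single i (q-1)) := by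
    rw [← map_add, key, map_add]
    exact add_lt_add_of_le_of_lt le_rfl h2
  exact lt_of_add_lt_add_right h3

include hvar in
lemma lmExp_fermat {q : ℕ} (hq : 2 ≤ q) (i j : Fin (m+1)) (hij : i < j) :
    lmExp mo (X i ^ q * X j - X i * X j ^ q : MvPolynomial (Fin (m + 1)) k)
      = Finsupp.single i q + Finsupp.single j 1 := by
  have hsupp : (X i ^ q * X j - X i * X j ^ q : MvPolynomial (Fin (m + 1)) k).support
      = {Finsupp.single i q + Finsupp.single j 1, Finsupp.single i 1 + Finsupp.single j q} :=
    support_fermat q hq i j hij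
  rw [lmExp, hsupp]
  rw [Finset.sup_insert, Finset.sup_singleton]
  rw [max_eq_left (le_of_lt (syn_mu2_lt_mu1 mo hvar hq i j hij))]
  exact mo.toSyn.symm_apply_apply _

lemma mapDomain_monomial (q : ℕ) (ν : Fin (m+1) →₀ ℕ) (c : k) :
    AddMonoidAlgebra.mapDomain (projRed q) (monomial ν c : MvPolynomial (Fin (m+1)) k)
      = monomial (projRed q ν) c := by
  rw [← single_eq_monomial, ← single_eq_monomial, AddMonoidAlgebra.mapDomain_single]

lemma mapDomain_monomial_mul_fermat {q : ℕ} (hq : 2 ≤ q) (i j : Fin (m+1)) (hij : i < j)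
    (ν : Fin (m+1) →₀ ℕ) (c : k) :
    AddMonoidAlgebra.mapDomain (projRed q)
      ((monomial ν c) * (X i ^ q * X j - X i * X j ^ q) : MvPolynomial (Fin (m+1)) k) = 0 := by
  rw [fermat_eq, mul_sub, monomial_mul, monomial_mul, mul_one, sub_eq_add_neg,
    ← map_neg (monomial _ : k →ₗ[k] MvPolynomial (Fin (m+1)) k)]
  rw [AddMonoidAlgebra.mapDomain_add, mapDomain_monomial, mapDomain_monomial]
  have he : projRed q (ν + (Finsupp.single i q + Finsupp.single j 1))
      = projRed q (ν + (Finsupp.single i 1 + Finsupp.single j q)) := by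
    rw [← add_assoc, ← add_assoc]
    exact projRed_exchange hq i j hij ν
  rw [he, ← single_eq_monomial, ← single_eq_monomial, ← AddMonoidAlgebra.single_add, add_neg_cancel,
    AddMonoidAlgebra.single_zero]

lemma amaMapDomain_finset_sum {ι : Type} (f : (Fin (m+1) →₀ ℕ) → (Fin (m+1) →₀ ℕ))
    (s : Finset ι) (g : ι → MvPolynomial (Fin (m+1)) k) :
    AddMonoidAlgebra.mapDomain f (∑ i ∈ s, g i) = ∑ i ∈ s, AddMonoidAlgebra.mapDomain f (g i) := by
  classical
  induction s using Finset.induction_on with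
  | empty => simp
  | insert a s ha ih =>
    rw [Finset.sum_insert ha, Finset.sum_insert ha, AddMonoidAlgebra.mapDomain_add, ih]

lemma mapDomain_eq_zero_of_mem {q : ℕ} (hq : 2 ≤ q) (f : MvPolynomial (Fin (m+1)) k)
    (hf : f ∈ fermatIdeal q m k) :
    AddMonoidAlgebra.mapDomain (projRed q) f = 0 := by
  have key : ∀ g, ∀ (_ : g ∈ fermatIdeal q m k), ∀ p : MvPolynomial (Fin (m+1)) k,
      AddMonoidAlgebra.mapDomain (projRed q) (p * g) = 0 := by
    intro g hg
    refine Submodule.span_induction ?_ ?_ ?_ ?_ hg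
    · rintro x ⟨i, j, hij, rfl⟩ p
      conv_lhs => rw [as_sum p, Finset.sum_mul]
      rw [amaMapDomain_finset_sum]
      refine Finset.sum_eq_zero fun ν hν => ?_
      exact mapDomain_monomial_mul_fermat hq i j hij ν _
    · intro p
      rw [mul_zero]
      exact AddMonoidAlgebra.mapDomain_zero _
    · intro x y hx hy ihx ihy p
      rw [mul_add, AddMonoidAlgebra.mapDomain_add, ihx p, ihy p, add_zero]
    · intro a x hx ihx p
      rw [smul_eq_mul, ← mul_assoc]
      exact ihx (p * a)
  have := key f hf 1
  rwa [one_mul] at this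

lemma lmExp_mem (f : MvPolynomial (Fin (m+1)) k)
    (hf : f ≠ 0) : lmExp mo f ∈ f.support := by
  obtain ⟨b, hb, he⟩ := Finset.exists_mem_eq_sup f.support
    (by rwa [MvPolynomial.support_nonempty]) (fun μ => mo.toSyn μ)
  rw [lmExp, he, AddEquiv.symm_apply_apply]
  exact hb

lemma le_lmExp (f : MvPolynomial (Fin (m+1)) k)
    (μ : Fin (m+1) →₀ ℕ) (hμ : μ ∈ f.support) :
    mo.toSyn μ ≤ mo.toSyn (lmExp mo f) := by
  rw [lmExp, AddEquiv.apply_symm_apply]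
  exact Finset.le_sup hμ

include hvar in
lemma fermat_main1 {q : ℕ} (hq : 2 ≤ q) (f : MvPolynomial (Fin (m+1)) k)
    (hf : f ∈ fermatIdeal q m k) (hf0 : f ≠ 0) :
    ∃ i j : Fin (m+1), i < j ∧
      Finsupp.single i q + Finsupp.single j 1 ≤ lmExp mo f := by
  by_contra hc
  push_neg at hc
  set d := lmExp mo f with hdd
  have hdred : projRed q d = d :=
    projRed_of_reduced hq d (fun i j hij => by
      intro hle
      exact absurd hle (hc i j hij))
  have h0 := mapDomain_eq_zero_of_mem hq f hf
  have h1 := congrArg (MvPolynomial.coeff d) h0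
  rw [MvPolynomial.coeff_zero, MvPolynomial.coeff, AddMonoidAlgebra.coeff_mapDomain,
    Finsupp.mapDomain, Finsupp.sum_apply, Finsupp.sum] at h1
  simp only [Finsupp.single_apply] at h1
  have hdm : d ∈ f.support := lmExp_mem mo f hf0
  have h1' : (∑ x ∈ f.support, if projRed q x = d then coeff x f else 0) = 0 := h1
  have h2 : (∑ x ∈ f.support, if projRed q x = d then coeff x f else 0)
      = (if projRed q d = d then coeff d f else 0) := by
    refine Finset.sum_eq_single_of_mem d hdm (fun b hb hbd => ?_)
    rw [if_neg]
    intro hPb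
    exact hbd (projRed_rigid mo hvar b d hPb (le_lmExp mo f b hb))
  rw [h2, if_pos hdred] at h1'
  exact (MvPolynomial.mem_support_iff.mp hdm) h1'

end FermatAux

/-- The Fermat polynomials form a Gröbner basis (in fact a reduced Gröbner basis) of the
ideal they generate, with respect to any monomial order in which `x_0 ≻ x_1 ≻ ... ≻ x_m`:
the leading monomial of every nonzero member of the ideal is divisible by the leading
monomial of some Fermat polynomial, each Fermat polynomial has leading coefficient `1`, and
no monomial of a Fermat polynomial is divisible by the leading monomial of another one. -/
theorem fermat_groebner_basis (q m : ℕ)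
    (Fq : Type) [Field Fq] [Fintype Fq] (hq : Fintype.card Fq = q)
    (k : Type) [Field k] [Algebra Fq k] [Algebra.IsAlgebraic Fq k]
    (mo : MonomialOrder (Fin (m + 1)))
    (hvar : ∀ i j : Fin (m + 1), i < j →
      mo.toSyn (Finsupp.single j 1) < mo.toSyn (Finsupp.single i 1)) :
    (∀ f ∈ fermatIdeal q m k, f ≠ 0 →
      ∃ i j : Fin (m + 1), i < j ∧
        lmExp mo (X i ^ q * X j - X i * X j ^ q : MvPolynomial (Fin (m + 1)) k) ≤ lmExp mo f)
    ∧ (∀ i j : Fin (m + 1), i < j →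
        MvPolynomial.coeff
          (lmExp mo (X i ^ q * X j - X i * X j ^ q : MvPolynomial (Fin (m + 1)) k))
          (X i ^ q * X j - X i * X j ^ q : MvPolynomial (Fin (m + 1)) k) = 1 ∧
        ∀ r s : Fin (m + 1), r < s → (r, s) ≠ (i, j) →
          ∀ μ ∈ (X i ^ q * X j - X i * X j ^ q : MvPolynomial (Fin (m + 1)) k).support,
            ¬ lmExp mo (X r ^ q * X s - X r * X s ^ q : MvPolynomial (Fin (m + 1)) k) ≤ μ) := by
  have hq2 : 2 ≤ q := by
    have h2 := Fintype.one_lt_card (α := Fq)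
    omega
  constructor
  · intro f hf hf0
    obtain ⟨i, j, hij, hle⟩ := fermat_main1 mo hvar hq2 f hf hf0
    exact ⟨i, j, hij, by rw [lmExp_fermat mo hvar hq2 i j hij]; exact hle⟩
  · intro i j hij
    constructor
    · rw [lmExp_fermat mo hvar hq2 i j hij, coeff_fermat q i j, if_pos rfl,
        if_neg (mu_ne q hq2 i j hij)]
      norm_num
    · intro r s hrs hne μ hμ hle
      rw [support_fermat q hq2 i j hij] at hμ
      rw [lmExp_fermat mo hvar hq2 r s hrs] at hle
      have hne' : r = i → s ≠ j := fun h1 h2 => hne (by rw [h1, h2])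
      simp only [Finset.mem_insert, Finset.mem_singleton] at hμ
      rcases hμ with rfl | rfl
      · have hr : q ≤ (if i = r then q else 0) + (if j = r then 1 else 0) := by
          have h := (Finsupp.le_def.mp hle) r
          simp only [Finsupp.add_apply, Finsupp.single_apply, eq_self_iff_true,
            if_true, ite_true, hrs.ne', if_false, ite_false] at h
          exact le_trans (by omega) h
        have hs : 1 ≤ (if i = s then q else 0) + (if j = s then 1 else 0) := by
          have h := (Finsupp.le_def.mp hle) s
          simp only [Finsupp.add_apply, Finsupp.single_apply, eq_self_iff_true,
            if_true, ite_true, hrs.ne, if_false, ite_false] at h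
          exact le_trans (by omega) h
        by_cases hir : i = r
        · by_cases hjs : j = s
          · exact hne' hir.symm hjs.symm
          · have his : ¬ i = s := by rw [hir]; exact hrs.ne
            rw [if_neg his, if_neg hjs] at hs
            omega
        · rw [if_neg hir] at hr
          by_cases hjr : j = r
          · rw [if_pos hjr] at hr; omega
          · rw [if_neg hjr] at hr; omega
      · have hr : q ≤ (if i = r then 1 else 0) + (if j = r then q else 0) := by
          have h := (Finsupp.le_def.mp hle) r
          simp only [Finsupp.add_apply, Finsupp.single_apply, eq_self_iff_true,
            if_true, ite_true, hrs.ne', if_false, ite_false] at h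
          exact le_trans (by omega) h
        have hs : 1 ≤ (if i = s then 1 else 0) + (if j = s then q else 0) := by
          have h := (Finsupp.le_def.mp hle) s
          simp only [Finsupp.add_apply, Finsupp.single_apply, eq_self_iff_true,
            if_true, ite_true, hrs.ne, if_false, ite_false] at h
          exact le_trans (by omega) h
        by_cases hjr : j = r
        · have his : ¬ i = s := ne_of_lt (lt_trans (hjr ▸ hij) hrs)
          have hjs : ¬ j = s := by rw [hjr]; exact hrs.ne
          rw [if_neg his, if_neg hjs] at hs
          omega
        · by_cases hir : i = r
          · rw [if_pos hir, if_neg hjr] at hr; omega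
          · rw [if_neg hir, if_neg hjr] at hr; omega
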